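/- arXiv:2411.11614 — 2 statements merged into one kernel-verified Lean document; each statement's English description precedes it below -/
import Mathlib

section
/- Any no-signalling bipartite distribution projected to the instrumental scenario satisfies max_a ∑_b max_x p(a,b|x) ≤ 1. Precisely: if P(a,b|x,y) (a,b,x,y ∈ {0,1}) is a no-signalling distribution and p(a,b|x) := P(a,b|x, y=a), then max_a ∑_b max_x p(a,b|x) ≤ 1. -/
open Finset

lemma zmod2_sum (f : ZMod 2 → ℝ) : ∑ i : ZMod 2, f i = f 0 + f 1 := by
  rw [show (univ : Finset (ZMod 2)) = {0, 1} by decide]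
  simp

theorem instrumental_inequality_no_signalling
    (P : ZMod 2 → ZMod 2 → ZMod 2 → ZMod 2 → ℝ)
    (hnn : ∀ a b x y, 0 ≤ P a b x y)
    (hnorm : ∀ x y, ∑ a : ZMod 2, ∑ b : ZMod 2, P a b x y = 1)
    (hnsB : ∀ a x y y', ∑ b : ZMod 2, P a b x y = ∑ b : ZMod 2, P a b x y')
    (hnsA : ∀ b x x' y, ∑ a : ZMod 2, P a b x y = ∑ a : ZMod 2, P a b x' y)
    (p : ZMod 2 → ZMod 2 → ZMod 2 → ℝ)
    (hp : ∀ a b x, p a b x = P a b x a) :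
    ∀ a : ZMod 2, ∑ b : ZMod 2, max (p a b 0) (p a b 1) ≤ 1 := by
  intro a
  have key : ∀ x x' : ZMod 2, P a 0 x a + P a 1 x' a ≤ 1 := by
    intro x x'
    have h1 := hnorm x' a
    have h2 := hnsA 0 x x' a
    simp only [zmod2_sum] at h1 h2
    obtain rfl | rfl : a = 0 ∨ a = 1 := by clear h1 h2; revert a; decide
    all_goals
      simp_all <;>
      linarith [hnn 0 0 x 0, hnn 1 0 x 0, hnn 0 1 x' 0, hnn 1 1 x' 0,
        hnn 0 0 x 1, hnn 1 0 x 1, hnn 0 1 x' 1, hnn 1 1 x' 1]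
  rw [zmod2_sum]
  rcases max_cases (p a 0 0) (p a 0 1) with ⟨h, _⟩ | ⟨h, _⟩ <;>
  rcases max_cases (p a 1 0) (p a 1 1) with ⟨h', _⟩ | ⟨h', _⟩ <;>
  rw [h, h', hp, hp] <;> apply key
end

section
/- The distribution p(a,c|x,z) = (1/2)·[a ⊕ c = x·z] (the PR box) cannot be written as p(a,c|x,z) = ∑_{λ₁,λ₂} q₁(λ₁)·q₂(λ₂)·p_A(a|x,λ₁)·p_C(c|z,λ₂) for any finite sets Λ₁, Λ₂, probability distributions q₁, q₂, and conditional distributions p_A, p_C; i.e., the PR box is not a product of independent local classical responses. -/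
open Finset

private lemma chsh_aux (a0 a1 b0 b1 c0 c1 d0 d1 : ℝ)
    (ha0 : 0 ≤ a0) (ha1 : 0 ≤ a1) (hb0 : 0 ≤ b0) (hb1 : 0 ≤ b1)
    (hc0 : 0 ≤ c0) (hc1 : 0 ≤ c1) (hd0 : 0 ≤ d0) (hd1 : 0 ≤ d1)
    (ha : a0 + a1 = 1) (hb : b0 + b1 = 1) (hc : c0 + c1 = 1) (hd : d0 + d1 = 1) :
    a0*c0 + a1*c1 + a0*d0 + a1*d1 + b0*c0 + b1*c1 + b0*d1 + b1*d0 ≤ 3 := by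
  have e1 : a1 = 1 - a0 := by linarith
  have e2 : b1 = 1 - b0 := by linarith
  have e3 : c1 = 1 - c0 := by linarith
  have e4 : d1 = 1 - d0 := by linarith
  subst e1 e2 e3 e4
  nlinarith [mul_nonneg (mul_nonneg hc0 hb1) hd1, mul_nonneg (mul_nonneg hb0 hd0) hc1,
    mul_nonneg (mul_nonneg ha0 hc1) hd1, mul_nonneg (mul_nonneg hc0 hd0) ha1]

private lemma sum2_aux (f : ZMod 2 → ℝ) : ∑ a, f a = f 0 + f 1 := Fin.sum_univ_two f

theorem PRbox_not_product_of_independent_locals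
    (Λ₁ Λ₂ : Type) [Fintype Λ₁] [Fintype Λ₂]
    (q₁ : Λ₁ → ℝ) (q₂ : Λ₂ → ℝ)
    (hq₁ : ∀ l, 0 ≤ q₁ l) (hq₁1 : ∑ l, q₁ l = 1)
    (hq₂ : ∀ l, 0 ≤ q₂ l) (hq₂1 : ∑ l, q₂ l = 1)
    (pA : ZMod 2 → ZMod 2 → Λ₁ → ℝ)
    (hpA : ∀ a x l, 0 ≤ pA a x l) (hpA1 : ∀ x l, ∑ a, pA a x l = 1)
    (pC : ZMod 2 → ZMod 2 → Λ₂ → ℝ)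
    (hpC : ∀ c z l, 0 ≤ pC c z l) (hpC1 : ∀ z l, ∑ c, pC c z l = 1) :
    ¬ (∀ a c x z : ZMod 2,
        (if a + c = x * z then (1 / 2 : ℝ) else 0) =
          ∑ l₁, ∑ l₂, q₁ l₁ * q₂ l₂ * pA a x l₁ * pC c z l₂) := by
  intro h
  -- the eight instances of h that have probability 1/2
  have h1 := h 0 0 0 0; have h2 := h 1 1 0 0
  have h3 := h 0 0 0 1; have h4 := h 1 1 0 1
  have h5 := h 0 0 1 0; have h6 := h 1 1 1 0
  have h7 := h 0 1 1 1; have h8 := h 1 0 1 1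
  norm_num at h1 h2 h3 h4 h5 h6 h7 h8
  rw [if_pos (show (2:ZMod 2) = 0 by decide)] at h2 h4 h6
  -- the pointwise CHSH quantity
  set F : Λ₁ → Λ₂ → ℝ := fun l₁ l₂ =>
    pA 0 0 l₁ * pC 0 0 l₂ + pA 1 0 l₁ * pC 1 0 l₂ +
    pA 0 0 l₁ * pC 0 1 l₂ + pA 1 0 l₁ * pC 1 1 l₂ +
    pA 0 1 l₁ * pC 0 0 l₂ + pA 1 1 l₁ * pC 1 0 l₂ +
    pA 0 1 l₁ * pC 1 1 l₂ + pA 1 1 l₁ * pC 0 1 l₂ with hF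
  have key : ∀ l₁ l₂, F l₁ l₂ ≤ 3 := by
    intro l₁ l₂
    have hA0 := hpA1 0 l₁; have hA1 := hpA1 1 l₁
    have hC0 := hpC1 0 l₂; have hC1 := hpC1 1 l₂
    rw [sum2_aux] at hA0 hA1 hC0 hC1
    have := chsh_aux (pA 0 0 l₁) (pA 1 0 l₁) (pA 0 1 l₁) (pA 1 1 l₁)
      (pC 0 0 l₂) (pC 1 0 l₂) (pC 0 1 l₂) (pC 1 1 l₂)
      (hpA 0 0 l₁) (hpA 1 0 l₁) (hpA 0 1 l₁) (hpA 1 1 l₁)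
      (hpC 0 0 l₂) (hpC 1 0 l₂) (hpC 0 1 l₂) (hpC 1 1 l₂)
      hA0 hA1 hC0 hC1
    rw [hF]; dsimp only; linarith
  -- summing the eight equations gives total 4
  have hsum : ∑ l₁, ∑ l₂, q₁ l₁ * q₂ l₂ * F l₁ l₂ = 4 := by
    have e : ∀ l₁ l₂, q₁ l₁ * q₂ l₂ * F l₁ l₂ =
        q₁ l₁ * q₂ l₂ * pA 0 0 l₁ * pC 0 0 l₂ +
        q₁ l₁ * q₂ l₂ * pA 1 0 l₁ * pC 1 0 l₂ +
        q₁ l₁ * q₂ l₂ * pA 0 0 l₁ * pC 0 1 l₂ +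
        q₁ l₁ * q₂ l₂ * pA 1 0 l₁ * pC 1 1 l₂ +
        q₁ l₁ * q₂ l₂ * pA 0 1 l₁ * pC 0 0 l₂ +
        q₁ l₁ * q₂ l₂ * pA 1 1 l₁ * pC 1 0 l₂ +
        q₁ l₁ * q₂ l₂ * pA 0 1 l₁ * pC 1 1 l₂ +
        q₁ l₁ * q₂ l₂ * pA 1 1 l₁ * pC 0 1 l₂ := by
      intro l₁ l₂; rw [hF]; ring
    simp_rw [e, Finset.sum_add_distrib]
    linarith [h1, h2, h3, h4, h5, h6, h7, h8]
  -- but the total is at most 3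
  have hle : ∑ l₁, ∑ l₂, q₁ l₁ * q₂ l₂ * F l₁ l₂ ≤ 3 := by
    have step1 : ∑ l₁, ∑ l₂, q₁ l₁ * q₂ l₂ * F l₁ l₂ ≤
        ∑ l₁, ∑ l₂, q₁ l₁ * q₂ l₂ * 3 := by
      refine Finset.sum_le_sum fun l₁ _ => Finset.sum_le_sum fun l₂ _ => ?_
      exact mul_le_mul_of_nonneg_left (key l₁ l₂) (mul_nonneg (hq₁ l₁) (hq₂ l₂))
    have step2 : ∑ l₁, ∑ l₂, q₁ l₁ * q₂ l₂ * 3 = 3 := by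
      simp_rw [mul_assoc, ← Finset.mul_sum, ← Finset.sum_mul, hq₂1, hq₁1]
      norm_num
    linarith
  linarith
end
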